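/- arXiv:1803.08750 — 7 statements merged into one kernel-verified Lean document; each statement's English description precedes it below -/
import Mathlib

section
/- Let h be a Lie subalgebra of End(Rⁿ) all of whose elements are skew-symmetric with respect to the standard Euclidean inner product on Rⁿ (i.e. h ⊆ so(n,R)). Then the first prolongation h^(1) = 0. -/
noncomputable section

/-- Membership in the `k`-th prolongation of a set `h` of endomorphisms of a module `W`:
`T` is a symmetric `(k+1)`-multilinear map such that, fixing the first `k` arguments,
the resulting endomorphism belongs to `h`. -/
def InProl {K : Type*} [Field K] {W : Type*} [AddCommGroup W] [Module K W]
    (h : Set (Module.End K W)) (k : ℕ)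
    (T : MultilinearMap K (fun _ : Fin (k+1) => W) W) : Prop :=
  (∀ (σ : Equiv.Perm (Fin (k+1))) (v : Fin (k+1) → W), (T fun i => v (σ i)) = T v) ∧
  (∀ v : Fin k → W, ∃ A ∈ h, ∀ w : W, A w = T (Fin.snoc v w))

attribute [local instance 100] LieRing.ofAssociativeRing

/-- any Lie subalgebra of `so(n,ℝ)` has trivial first prolongation. -/
theorem skew_symmetric_subalgebra_first_prolongation_trivial {n : ℕ}
    (h : LieSubalgebra ℝ (Module.End ℝ (Fin n → ℝ)))
    (hskew : ∀ A ∈ h, ∀ x y : Fin n → ℝ,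
      (∑ i, A x i * y i) + (∑ i, x i * A y i) = 0) :
    ∀ T : MultilinearMap ℝ (fun _ : Fin 2 => (Fin n → ℝ)) (Fin n → ℝ),
      InProl (h : Set (Module.End ℝ (Fin n → ℝ))) 1 T → T = 0 := by
  intro T hT
  obtain ⟨hsym, hmem⟩ := hT
  -- symmetry of T in its two arguments
  have hsym2 : ∀ x y : Fin n → ℝ, T ![x, y] = T ![y, x] := by
    intro x y
    have := hsym (Equiv.swap 0 1) ![y, x]
    rw [← this]
    congr 1
    funext i
    fin_cases i <;> simp
  -- the trilinear form B
  set B : (Fin n → ℝ) → (Fin n → ℝ) → (Fin n → ℝ) → ℝ :=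
    fun x y z => ∑ i, T ![x, y] i * z i with hB
  have hBsym : ∀ x y z, B x y z = B y x z := by
    intro x y z; simp only [hB, hsym2 x y]
  have hBskew : ∀ x y z, B x y z + B x z y = 0 := by
    intro x y z
    obtain ⟨A, hA, hAe⟩ := hmem ![x]
    have h1 : ∀ w, A w = T ![x, w] := by
      intro w
      rw [hAe]
      congr 1
      funext i
      fin_cases i <;> simp [Fin.snoc]
    have key := hskew A hA y z
    simp only [h1] at key
    have : B x z y = ∑ i, y i * T ![x, z] i := by
      simp only [hB]; exact Finset.sum_congr rfl fun i _ => mul_comm _ _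
    show B x y z + B x z y = 0
    rw [this]
    simp only [hB]
    exact key
  have hBzero : ∀ x y z, B x y z = 0 := by
    intro x y z
    have e1 : B x y z = -B x z y := by linarith [hBskew x y z]
    have e2 : B x z y = B z x y := hBsym x z y
    have e3 : B z x y = -B z y x := by linarith [hBskew z x y]
    have e4 : B z y x = B y z x := hBsym z y x
    have e5 : B y z x = -B y x z := by linarith [hBskew y z x]
    have e6 : B y x z = B x y z := hBsym y x z
    linarith
  have hTzero : ∀ x y : Fin n → ℝ, T ![x, y] = 0 := by
    intro x y
    have := hBzero x y (T ![x, y])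
    funext i
    have hnn : ∀ j ∈ Finset.univ, (0:ℝ) ≤ T ![x, y] j * T ![x, y] j :=
      fun j _ => mul_self_nonneg _
    have := (Finset.sum_eq_zero_iff_of_nonneg hnn).mp this i (Finset.mem_univ i)
    simpa [mul_self_eq_zero] using this
  apply MultilinearMap.ext
  intro v
  show T v = 0
  have hv : v = ![v 0, v 1] := by
    funext i; fin_cases i <;> rfl
  rw [hv]
  simp [hTzero]
end
end

section
/- Let K be the field R or C, let h be a Lie subalgebra of End(Kⁿ), and let θ : h → h be a Lie algebra automorphism of h (a K-linear bijection with θ[A,B] = [θA, θB]). Let h^d_θ = {(A, θ(A)) : A ∈ h} be the twisted diagonal Lie subalgebra of End(Kⁿ ⊕ Kⁿ), acting block-diagonally: (A, θ(A))·(x, y) = (Ax, θ(A)y). Then the first prolongation of h^d_θ is zero: (h^d_θ)^(1) = 0. -/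
noncomputable section

attribute [local instance 100] LieRing.ofAssociativeRing

/-- the twisted diagonal subalgebra `h^d_θ ⊆ End(Kⁿ ⊕ Kⁿ)` of a linear Lie
algebra `h ⊆ End(Kⁿ)` (`K = ℝ` or `ℂ`), twisted by a Lie algebra automorphism `θ` of `h`,
has trivial first prolongation. -/
theorem twisted_diagonal_first_prolongation_trivial
    {K : Type*} [RCLike K] {n : ℕ}
    (h : LieSubalgebra K (Module.End K (Fin n → K)))
    (θ : h ≃ₗ⁅K⁆ h) :
    ∀ T : MultilinearMap K (fun _ : Fin 2 => ((Fin n → K) × (Fin n → K)))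
        ((Fin n → K) × (Fin n → K)),
      InProl {E : Module.End K ((Fin n → K) × (Fin n → K)) |
          ∃ A : h, E = LinearMap.prodMap (A : Module.End K (Fin n → K))
            ((θ A : h) : Module.End K (Fin n → K))} 1 T → T = 0 := by
  intro T hT
  obtain ⟨hsym, hmem⟩ := hT
  set V := (Fin n → K) × (Fin n → K)
  -- extract, for each a : V, an A a : h with the prodMap property
  have key : ∀ a : V, ∃ A : h, ∀ w : V,
      (((A : Module.End K (Fin n → K)) w.1,
        ((θ A : h) : Module.End K (Fin n → K)) w.2) : V) = T ![a, w] := by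
    intro a
    obtain ⟨E, ⟨A, rfl⟩, hE⟩ := hmem ![a]
    refine ⟨A, fun w => ?_⟩
    have hsnoc : (Fin.snoc ![a] w : Fin 2 → V) = ![a, w] := by
      funext i; fin_cases i <;> simp [Fin.snoc]
    rw [← hsnoc, ← hE w]
    rfl
  choose A hA using key
  -- symmetry of T
  have hswap : ∀ a b : V, T ![a, b] = T ![b, a] := by
    intro a b
    have := hsym (Equiv.swap 0 1) ![a, b]
    rw [← this]
    congr 1
    funext i; fin_cases i <;> simp
  have hz0 : θ (0 : h) = 0 := map_zero θ.toLieHom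
  -- θ (A (x,0)) = 0
  have h1 : ∀ x : Fin n → K, A ((x, 0) : V) = 0 := by
    intro x
    have hθ0 : θ (A ((x, 0) : V)) = 0 := by
      have hend : ((θ (A ((x, 0) : V)) : h) : Module.End K (Fin n → K)) = 0 := by
        refine LinearMap.ext fun w₂ => ?_
        have e1 := hA ((x, 0) : V) ((0, w₂) : V)
        have e2 := hA ((0, w₂) : V) ((x, 0) : V)
        rw [hswap] at e2
        have := e1.trans e2.symm
        have h2 := congrArg Prod.snd this
        simpa using h2
      exact Subtype.ext (by rw [hend]; exact (ZeroMemClass.coe_zero _).symm)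
    calc A ((x, 0) : V) = θ.symm (θ (A ((x, 0) : V))) := (θ.symm_apply_apply _).symm
      _ = θ.symm (θ (0 : h)) := by rw [hθ0, hz0]
      _ = 0 := θ.symm_apply_apply _
  -- A a = 0 for all a
  have h2 : ∀ a : V, A a = 0 := by
    intro a
    apply Subtype.ext
    refine LinearMap.ext fun w₁ => ?_
    have e1 := hA a ((w₁, 0) : V)
    have e2 := hA ((w₁, (0 : Fin n → K)) : V) a
    rw [hswap] at e2
    have := e1.trans e2.symm
    have h3 := congrArg Prod.fst this
    simp only at h3
    rw [h1 w₁] at h3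
    simpa using h3
  -- conclude
  apply MultilinearMap.ext
  intro v
  have hv : (fun i => v i) = ![v 0, v 1] := by
    funext i; fin_cases i <;> rfl
  have hz := hA (v 0) (v 1)
  rw [h2 (v 0), hz0] at hz
  simp only [ZeroMemClass.coe_zero, LinearMap.zero_apply] at hz
  have : T v = 0 := by
    calc T v = T ![v 0, v 1] := by rw [← hv]
      _ = 0 := by rw [← hz]; simp
  simpa using this
end
end

section
/- Let ρ : sl₂(R) → End(R⁴) be the irreducible 4-dimensional representation of sl₂(R) on binary cubic forms: in the basis (v₀, v₁, v₂, v₃) of R⁴ it is determined by ρ(e): v₀ ↦ 0, v₁ ↦ v₀, v₂ ↦ 2v₁, v₃ ↦ 3v₂; ρ(f): v₀ ↦ 3v₁, v₁ ↦ 2v₂, v₂ ↦ v₃, v₃ ↦ 0; ρ(h): v_i ↦ (3 - 2i)·v_i, where (e, f, h) is the standard basis of sl₂(R) with [h,e] = 2e, [h,f] = -2f, [e,f] = h. Then the Lie subalgebra ρ(sl₂(R)) ⊆ End(R⁴) has trivial first prolongation, and consequently all its prolongations vanish: ρ(sl₂(R))^(k) = 0 for all k ≥ 1. -/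
noncomputable section

/-- The image `ρ(e)` of the standard generator `e` of `sl₂(ℝ)` under the irreducible
4-dimensional representation on binary cubics: `v₀ ↦ 0, v₁ ↦ v₀, v₂ ↦ 2v₁, v₃ ↦ 3v₂`. -/
def repE : Module.End ℝ (Fin 4 → ℝ) :=
  Matrix.toLin' !![0,1,0,0; 0,0,2,0; 0,0,0,3; 0,0,0,0]

/-- `ρ(f)`: `v₀ ↦ 3v₁, v₁ ↦ 2v₂, v₂ ↦ v₃, v₃ ↦ 0`. -/
def repF : Module.End ℝ (Fin 4 → ℝ) :=
  Matrix.toLin' !![0,0,0,0; 3,0,0,0; 0,2,0,0; 0,0,1,0]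

/-- `ρ(h)`: `v_i ↦ (3 - 2i)·v_i`. -/
def repH : Module.End ℝ (Fin 4 → ℝ) :=
  Matrix.toLin' !![3,0,0,0; 0,1,0,0; 0,0,-1,0; 0,0,0,-3]

/-- The image `ρ(sl₂(ℝ)) ⊆ End(ℝ⁴)` of the irreducible 4-dimensional representation,
i.e. the linear span of `ρ(e), ρ(f), ρ(h)`. -/
def sl2Image : Set (Module.End ℝ (Fin 4 → ℝ)) :=
  (Submodule.span ℝ {repE, repF, repH} : Submodule ℝ (Module.End ℝ (Fin 4 → ℝ)))

lemma repE_apply (v : Fin 4 → ℝ) : repE v = ![v 1, 2 * v 2, 3 * v 3, 0] := by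
  funext i
  fin_cases i <;>
    simp [repE, Matrix.toLin'_apply, Matrix.mulVec, dotProduct, Fin.sum_univ_four]

lemma repF_apply (v : Fin 4 → ℝ) : repF v = ![0, 3 * v 0, 2 * v 1, v 2] := by
  funext i
  fin_cases i <;>
    simp [repF, Matrix.toLin'_apply, Matrix.mulVec, dotProduct, Fin.sum_univ_four]

lemma repH_apply (v : Fin 4 → ℝ) : repH v = ![3 * v 0, v 1, -v 2, -(3 * v 3)] := by
  funext i
  fin_cases i <;>
    simp [repH, Matrix.toLin'_apply, Matrix.mulVec, dotProduct, Fin.sum_univ_four]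

/-- the standard basis vectors of ℝ⁴ -/
def bv : Fin 4 → (Fin 4 → ℝ) := fun i => Pi.single i 1

lemma prol1_zero (T : MultilinearMap ℝ (fun _ : Fin 2 => (Fin 4 → ℝ)) (Fin 4 → ℝ))
    (hT : InProl sl2Image 1 T) : T = 0 := by
  obtain ⟨hsym, hmem⟩ := hT
  have hs : ∀ x y : Fin 4 → ℝ, T ![x, y] = T ![y, x] := by
    intro x y
    have h := hsym (Equiv.swap 0 1) ![y, x]
    have h2 : (fun i => (![y, x] : Fin 2 → Fin 4 → ℝ) ((Equiv.swap 0 1) i)) = ![x, y] := by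
      funext i; fin_cases i <;> simp
    rwa [h2] at h
  have key : ∀ x : Fin 4 → ℝ, ∃ a b c : ℝ, ∀ w, T ![x, w] =
      a • repE w + b • repF w + c • repH w := by
    intro x
    obtain ⟨A, hA, hAw⟩ := hmem ![x]
    have hsnoc : ∀ w : Fin 4 → ℝ, (Fin.snoc ![x] w : Fin 2 → Fin 4 → ℝ) = ![x, w] := by
      intro w; funext i; fin_cases i <;> simp [Fin.snoc]
    rw [sl2Image, SetLike.mem_coe, Submodule.mem_span_insert] at hA
    obtain ⟨a, z, hz, rfl⟩ := hA
    rw [Submodule.mem_span_insert] at hz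
    obtain ⟨b, z', hz', rfl⟩ := hz
    rw [Submodule.mem_span_singleton] at hz'
    obtain ⟨c, rfl⟩ := hz'
    refine ⟨a, b, c, fun w => ?_⟩
    rw [← hsnoc w, ← hAw w]
    simp [add_assoc]
  choose a b c hk using key
  -- scalar equations
  have q : ∀ i j : Fin 4,
      a (bv i) • repE (bv j) + b (bv i) • repF (bv j) + c (bv i) • repH (bv j)
      = a (bv j) • repE (bv i) + b (bv j) • repF (bv i) + c (bv j) • repH (bv i) := by
    intro i j
    rw [← hk, ← hk, hs]
  have comp : ∀ i j : Fin 4, ∀ l : Fin 4,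
      a (bv i) * (repE (bv j) l) + b (bv i) * (repF (bv j) l) + c (bv i) * (repH (bv j) l)
      = a (bv j) * (repE (bv i) l) + b (bv j) * (repF (bv i) l) + c (bv j) * (repH (bv i) l) := by
    intro i j l
    have := congrFun (q i j) l
    simpa using this
  have h010 := congrFun (q 0 1) 0
  simp [repE_apply, repF_apply, repH_apply, bv, Pi.single_apply] at h010
  have h011 := congrFun (q 0 1) 1
  simp [repE_apply, repF_apply, repH_apply, bv, Pi.single_apply] at h011
  have h012 := congrFun (q 0 1) 2
  simp [repE_apply, repF_apply, repH_apply, bv, Pi.single_apply] at h012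
  have h020 := congrFun (q 0 2) 0
  simp [repE_apply, repF_apply, repH_apply, bv, Pi.single_apply] at h020
  have h021 := congrFun (q 0 2) 1
  simp [repE_apply, repF_apply, repH_apply, bv, Pi.single_apply] at h021
  have h022 := congrFun (q 0 2) 2
  simp [repE_apply, repF_apply, repH_apply, bv, Pi.single_apply] at h022
  have h030 := congrFun (q 0 3) 0
  simp [repE_apply, repF_apply, repH_apply, bv, Pi.single_apply] at h030
  have h031 := congrFun (q 0 3) 1
  simp [repE_apply, repF_apply, repH_apply, bv, Pi.single_apply] at h031
  have h032 := congrFun (q 0 3) 2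
  simp [repE_apply, repF_apply, repH_apply, bv, Pi.single_apply] at h032
  have h120 := congrFun (q 1 2) 0
  simp [repE_apply, repF_apply, repH_apply, bv, Pi.single_apply] at h120
  have h121 := congrFun (q 1 2) 1
  simp [repE_apply, repF_apply, repH_apply, bv, Pi.single_apply] at h121
  have h130 := congrFun (q 1 3) 0
  simp [repE_apply, repF_apply, repH_apply, bv, Pi.single_apply] at h130
  have ha0 : a (Pi.single (0:Fin 4) 1) = 0 := h032
  have hb0 : b (Pi.single (0:Fin 4) 1) = 0 := h012
  have hc0 : c (Pi.single (0:Fin 4) 1) = 0 := h022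
  have hc1 : c (Pi.single (1:Fin 4) 1) = 0 := by linarith
  have hb1 : b (Pi.single (1:Fin 4) 1) = 0 := by linarith
  have ha1 : a (Pi.single (1:Fin 4) 1) = 0 := by linarith
  have ha2 : a (Pi.single (2:Fin 4) 1) = 0 := h120.symm
  have hb2 : b (Pi.single (2:Fin 4) 1) = 0 := by linarith
  have hc2 : c (Pi.single (2:Fin 4) 1) = 0 := h020
  have ha3 : a (Pi.single (3:Fin 4) 1) = 0 := h130.symm
  have hb3 : b (Pi.single (3:Fin 4) 1) = 0 := h031
  have hc3 : c (Pi.single (3:Fin 4) 1) = 0 := h030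
  have ha : ∀ i : Fin 4, a (bv i) = 0 := by
    intro i; fin_cases i <;> first | exact ha0 | exact ha1 | exact ha2 | exact ha3
  have hb : ∀ i : Fin 4, b (bv i) = 0 := by
    intro i; fin_cases i <;> first | exact hb0 | exact hb1 | exact hb2 | exact hb3
  have hc : ∀ i : Fin 4, c (bv i) = 0 := by
    intro i; fin_cases i <;> first | exact hc0 | exact hc1 | exact hc2 | exact hc3
  apply Module.Basis.ext_multilinear (fun _ => Pi.basisFun ℝ (Fin 4))
  intro v
  have hv : (fun i : Fin 2 => (Pi.basisFun ℝ (Fin 4)) (v i)) = ![bv (v 0), bv (v 1)] := by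
    funext i; fin_cases i <;> simp [bv]
  rw [hv, hk]
  simp [ha (v 0), hb (v 0), hc (v 0)]


def consPerm {k : ℕ} (σ : Equiv.Perm (Fin (k+1))) : Equiv.Perm (Fin (k+2)) where
  toFun := Fin.cons 0 (Fin.succ ∘ σ)
  invFun := Fin.cons 0 (Fin.succ ∘ σ.symm)
  left_inv i := by cases i using Fin.cases <;> simp
  right_inv i := by cases i using Fin.cases <;> simp

lemma prol_step {k : ℕ} (T : MultilinearMap ℝ (fun _ : Fin (k+2) => (Fin 4 → ℝ)) (Fin 4 → ℝ))
    (hT : InProl sl2Image (k+1) T) (x : Fin 4 → ℝ) :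
    InProl sl2Image k (T.curryLeft x) := by
  obtain ⟨hsym, hmem⟩ := hT
  constructor
  · intro σ v
    have h1 : (fun i => (Fin.cons x v : Fin (k+2) → _) (consPerm σ i))
        = Fin.cons x (fun i => v (σ i)) := by
      funext i; cases i using Fin.cases <;> simp [consPerm]
    have h2 := hsym (consPerm σ) (Fin.cons x v)
    simp only [MultilinearMap.curryLeft_apply]
    rw [← h2, h1]
  · intro v
    obtain ⟨A, hA, hAw⟩ := hmem (Fin.cons x v)
    refine ⟨A, hA, fun w => ?_⟩
    rw [hAw w]
    simp only [MultilinearMap.curryLeft_apply]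
    rw [Fin.cons_snoc_eq_snoc_cons]

/-- the irreducible subalgebra `sl₂⁴(ℝ) = ρ(sl₂(ℝ)) ⊆ End(ℝ⁴)` has trivial
first prolongation, and all its prolongations vanish. -/
theorem sl2_irreducible_four_dim_prolongations_trivial :
    (∀ T : MultilinearMap ℝ (fun _ : Fin 2 => (Fin 4 → ℝ)) (Fin 4 → ℝ),
      InProl sl2Image 1 T → T = 0) ∧
    (∀ k : ℕ, 1 ≤ k →
      ∀ T : MultilinearMap ℝ (fun _ : Fin (k+1) => (Fin 4 → ℝ)) (Fin 4 → ℝ),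
        InProl sl2Image k T → T = 0) := by
  refine ⟨prol1_zero, ?_⟩
  intro k
  induction k with
  | zero => exact fun h => absurd h (by omega)
  | succ n ih =>
    intro _ T hT
    rcases Nat.eq_zero_or_pos n with hn | hn
    · subst hn; exact prol1_zero T hT
    · have hz : ∀ x, T.curryLeft x = 0 := fun x => ih hn _ (prol_step T hT x)
      refine MultilinearMap.ext fun u => ?_
      calc T u = T (Fin.cons (u 0) (Fin.tail u)) := by rw [Fin.cons_self_tail]
        _ = (T.curryLeft (u 0)) (Fin.tail u) := rfl
        _ = 0 := by rw [hz]; rfl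
end
end

section
/- Let R[[y]] be the ring of formal power series in one variable over R, let m = y·R[[y]] be the subspace of series with zero constant term, and consider the linear operators D = d/dy (formal derivative) and E = y·(d/dy) on R[[y]]. (1) If ξ ⊆ m is a nonzero finite-dimensional linear subspace with E(ξ) ⊆ ξ and D(ξ) ⊆ ξ + R·1, then ξ = span(y, y², …, y^k) for some integer k ≥ 1. (2) There is no nonzero finite-dimensional linear subspace ξ ⊆ m satisfying E(ξ) ⊆ ξ, D(ξ) ⊆ ξ + R·1, and (y²·(d/dy))(ξ) ⊆ ξ. -/
noncomputable section

/-- The formal derivative `d/dy` on the ring of formal power series `ℝ[[y]]`. -/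
def Dop (f : PowerSeries ℝ) : PowerSeries ℝ :=
  PowerSeries.mk fun n => ((n : ℝ) + 1) * PowerSeries.coeff (n + 1) f

lemma coeff_Dop (f : PowerSeries ℝ) (n : ℕ) :
    PowerSeries.coeff n (Dop f) = ((n : ℝ) + 1) * PowerSeries.coeff (n + 1) f := by
  simp [Dop]

/-- The operator `E = y d/dy` as a linear map. -/
def Eop : PowerSeries ℝ →ₗ[ℝ] PowerSeries ℝ where
  toFun f := PowerSeries.mk fun n => (n : ℝ) * PowerSeries.coeff n f
  map_add' f g := by ext n; simp [mul_add]
  map_smul' c f := by ext n; simp [PowerSeries.coeff_mk]; ring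

lemma coeff_Eop (f : PowerSeries ℝ) (n : ℕ) :
    PowerSeries.coeff n (Eop f) = (n : ℝ) * PowerSeries.coeff n f := by
  simp [Eop]

lemma Eop_eq (f : PowerSeries ℝ) : Eop f = PowerSeries.X * Dop f := by
  ext n
  cases n with
  | zero => simp [coeff_Eop, PowerSeries.coeff_zero_eq_constantCoeff]
  | succ m =>
      rw [coeff_Eop, PowerSeries.coeff_succ_X_mul, coeff_Dop]
      push_cast; ring

lemma coeff_Eop_pow (f : PowerSeries ℝ) (j n : ℕ) :
    PowerSeries.coeff n ((Eop ^ j) f) = (n : ℝ) ^ j * PowerSeries.coeff n f := by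
  induction j with
  | zero => simp
  | succ j ih =>
      rw [pow_succ', Module.End.mul_apply, coeff_Eop, ih]
      ring

lemma coeff_aeval_Eop (p : Polynomial ℝ) (f : PowerSeries ℝ) (n : ℕ) :
    PowerSeries.coeff n ((Polynomial.aeval Eop p) f)
      = p.eval (n : ℝ) * PowerSeries.coeff n f := by
  induction p using Polynomial.induction_on' with
  | add p q hp hq => simp [map_add, LinearMap.add_apply, hp, hq, add_mul]
  | monomial j a =>
      rw [Polynomial.aeval_monomial]
      simp [Module.End.mul_apply, Module.algebraMap_end_apply, coeff_Eop_pow]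
      ring

lemma aeval_mem (ξ : Submodule ℝ (PowerSeries ℝ)) (hE : ∀ f ∈ ξ, Eop f ∈ ξ)
    (p : Polynomial ℝ) {f : PowerSeries ℝ} (hf : f ∈ ξ) :
    (Polynomial.aeval Eop p) f ∈ ξ := by
  have hpow : ∀ j : ℕ, (Eop ^ j) f ∈ ξ := by
    intro j
    induction j with
    | zero => simpa using hf
    | succ j ih => rw [pow_succ', Module.End.mul_apply]; exact hE _ ih
  induction p using Polynomial.induction_on' with
  | add p q hp hq => rw [map_add, LinearMap.add_apply]; exact ξ.add_mem hp hq
  | monomial j a =>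
      rw [Polynomial.aeval_monomial]
      simp only [Module.End.mul_apply, Module.algebraMap_end_apply]
      exact ξ.smul_mem _ (hpow j)

lemma restrict_pow_coe (ξ : Submodule ℝ (PowerSeries ℝ)) (hE : ∀ f ∈ ξ, Eop f ∈ ξ)
    (j : ℕ) (x : ξ) :
    ((((Eop.restrict hE) ^ j) x : ξ) : PowerSeries ℝ) = (Eop ^ j) (x : PowerSeries ℝ) := by
  induction j generalizing x with
  | zero => simp
  | succ j ih =>
      rw [pow_succ', Module.End.mul_apply, pow_succ', Module.End.mul_apply, ← ih x]
      exact LinearMap.restrict_coe_apply _ _ _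

lemma exists_annihilator (ξ : Submodule ℝ (PowerSeries ℝ)) [FiniteDimensional ℝ ξ]
    (hE : ∀ f ∈ ξ, Eop f ∈ ξ) {f : PowerSeries ℝ} (hf : f ∈ ξ) :
    ∃ p : Polynomial ℝ, p ≠ 0 ∧ (Polynomial.aeval Eop p) f = 0 := by
  set e : ξ →ₗ[ℝ] ξ := Eop.restrict hE with he
  refine ⟨e.charpoly, e.charpoly_monic.ne_zero, ?_⟩
  have h0 : (Polynomial.aeval e e.charpoly) ⟨f, hf⟩ = 0 := by
    rw [e.aeval_self_charpoly]; rfl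
  have key : ∀ p : Polynomial ℝ, ∀ x : ξ,
      ((Polynomial.aeval e p) x : PowerSeries ℝ)
        = (Polynomial.aeval Eop p) (x : PowerSeries ℝ) := by
    intro p
    induction p using Polynomial.induction_on' with
    | add p q hp hq => intro x; simp [map_add, LinearMap.add_apply, hp x, hq x]
    | monomial j a =>
        intro x
        simp only [Polynomial.aeval_monomial, Module.End.mul_apply,
          Module.algebraMap_end_apply, Submodule.coe_smul]
        rw [restrict_pow_coe ξ hE j x]
  have := key e.charpoly ⟨f, hf⟩
  rw [h0] at this
  simpa using this.symm

lemma lin_indep_Xpow : LinearIndependent ℝ (fun n : ℕ => (PowerSeries.X : PowerSeries ℝ) ^ n) := by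
  rw [linearIndependent_iff']
  intro s g h i hi
  have := congrArg (PowerSeries.coeff i) h
  simp only [map_sum, map_smul, PowerSeries.coeff_X_pow, map_zero, smul_eq_mul] at this
  rw [Finset.sum_eq_single i] at this
  · simpa using this
  · intro b _ hb; simp [Ne.symm hb]
  · intro h'; exact absurd hi h'

lemma finite_pow_set (ξ : Submodule ℝ (PowerSeries ℝ)) [FiniteDimensional ℝ ξ] :
    {n : ℕ | (PowerSeries.X : PowerSeries ℝ) ^ n ∈ ξ}.Finite := by
  set S := {n : ℕ | (PowerSeries.X : PowerSeries ℝ) ^ n ∈ ξ}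
  have hli : LinearIndependent ℝ (fun i : S => (⟨PowerSeries.X ^ (i : ℕ), i.2⟩ : ξ)) := by
    apply LinearIndependent.of_comp ξ.subtype
    exact lin_indep_Xpow.comp (fun i : S => (i : ℕ)) Subtype.coe_injective
  have : Finite S := hli.finite
  exact Set.toFinite S

/-- Monomial extraction: if `f ∈ ξ` has nonzero `n`-th coefficient, then `X^n ∈ ξ`. -/
lemma Xpow_mem (ξ : Submodule ℝ (PowerSeries ℝ)) [FiniteDimensional ℝ ξ]
    (hE : ∀ f ∈ ξ, Eop f ∈ ξ) {f : PowerSeries ℝ} (hf : f ∈ ξ) {n : ℕ}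
    (hn : PowerSeries.coeff n f ≠ 0) :
    (PowerSeries.X : PowerSeries ℝ) ^ n ∈ ξ := by
  obtain ⟨p, hp0, hp⟩ := exists_annihilator ξ hE hf
  have hco : ∀ m : ℕ, p.eval (m : ℝ) * PowerSeries.coeff m f = 0 := by
    intro m
    rw [← coeff_aeval_Eop, hp, map_zero]
  have hroot : ∀ m : ℕ, PowerSeries.coeff m f ≠ 0 → (m : ℝ) ∈ p.roots.toFinset := by
    intro m hm
    rw [Multiset.mem_toFinset, Polynomial.mem_roots hp0]
    exact (mul_eq_zero.mp (hco m)).resolve_right hm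
  set S := p.roots.toFinset with hS
  have hnS : (n : ℝ) ∈ S := hroot n hn
  set q := Lagrange.basis S (id : ℝ → ℝ) (n : ℝ) with hq
  have hg : (Polynomial.aeval Eop q) f ∈ ξ := aeval_mem ξ hE q hf
  have hgeq : (Polynomial.aeval Eop q) f = (PowerSeries.coeff n f) • PowerSeries.X ^ n := by
    ext m
    rw [coeff_aeval_Eop]
    rw [PowerSeries.coeff_smul, PowerSeries.coeff_X_pow]
    by_cases hmn : m = n
    · rw [if_pos hmn, hmn]
      have h1 : q.eval ((n : ℕ) : ℝ) = 1 := by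
        have := Lagrange.eval_basis_self (Set.injOn_id (S : Set ℝ)) hnS
        simpa using this
      rw [h1]; simp
    · rw [if_neg hmn]
      by_cases hmf : PowerSeries.coeff m f = 0
      · rw [hmf]; simp
      · have hmS : (m : ℝ) ∈ S := hroot m hmf
        have hne' : ((n : ℕ) : ℝ) ≠ ((m : ℕ) : ℝ) := by
          exact_mod_cast fun h => hmn (by exact_mod_cast h.symm)
        have h2 : q.eval ((m : ℕ) : ℝ) = 0 := by
          have := Lagrange.eval_basis_of_ne (s := S) (v := (id : ℝ → ℝ)) (i := ((n : ℕ) : ℝ)) (j := ((m : ℕ) : ℝ)) hne' hmS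
          simpa using this
        rw [h2]; simp
  have : (PowerSeries.coeff n f) • (PowerSeries.X : PowerSeries ℝ) ^ n ∈ ξ := hgeq ▸ hg
  have h2 : (PowerSeries.coeff n f)⁻¹ • ((PowerSeries.coeff n f)
      • (PowerSeries.X : PowerSeries ℝ) ^ n) ∈ ξ := ξ.smul_mem _ this
  rwa [smul_smul, inv_mul_cancel₀ hn, one_smul] at h2

lemma Dop_Xpow (n : ℕ) :
    Dop ((PowerSeries.X : PowerSeries ℝ) ^ (n + 1))
      = (((n : ℝ) + 1)) • (PowerSeries.X : PowerSeries ℝ) ^ n := by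
  ext m
  rw [coeff_Dop, PowerSeries.coeff_smul, PowerSeries.coeff_X_pow, PowerSeries.coeff_X_pow]
  by_cases h : m = n
  · subst h; simp
  · rw [if_neg h, if_neg (fun hh => h (Nat.succ_injective hh))]
    simp

/-- (1) a nonzero finite-dimensional subspace `ξ` of `y·ℝ[[y]]` invariant
under `E = y·d/dy` and invariant modulo constants under `D = d/dy` equals
`span(y, y², …, y^k)` for some `k ≥ 1`; (2) no such nonzero subspace is in addition
invariant under `y²·d/dy`. -/
theorem invariant_subspaces_of_power_series :
    (∀ ξ : Submodule ℝ (PowerSeries ℝ), FiniteDimensional ℝ ξ → ξ ≠ ⊥ →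
      (∀ f ∈ ξ, PowerSeries.constantCoeff f = 0) →
      (∀ f ∈ ξ, (PowerSeries.X : PowerSeries ℝ) * Dop f ∈ ξ) →
      (∀ f ∈ ξ, ∃ g ∈ ξ, ∃ c : ℝ, Dop f = g + PowerSeries.C c) →
      ∃ k : ℕ, 1 ≤ k ∧
        ξ = Submodule.span ℝ
          ((fun i : ℕ => (PowerSeries.X : PowerSeries ℝ) ^ i) '' Set.Icc 1 k)) ∧
    (¬ ∃ ξ : Submodule ℝ (PowerSeries ℝ), FiniteDimensional ℝ ξ ∧ ξ ≠ ⊥ ∧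
      (∀ f ∈ ξ, PowerSeries.constantCoeff f = 0) ∧
      (∀ f ∈ ξ, (PowerSeries.X : PowerSeries ℝ) * Dop f ∈ ξ) ∧
      (∀ f ∈ ξ, ∃ g ∈ ξ, ∃ c : ℝ, Dop f = g + PowerSeries.C c) ∧
      (∀ f ∈ ξ, (PowerSeries.X : PowerSeries ℝ) ^ 2 * Dop f ∈ ξ)) := by
  have part1 : ∀ ξ : Submodule ℝ (PowerSeries ℝ), FiniteDimensional ℝ ξ → ξ ≠ ⊥ →
      (∀ f ∈ ξ, PowerSeries.constantCoeff f = 0) →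
      (∀ f ∈ ξ, (PowerSeries.X : PowerSeries ℝ) * Dop f ∈ ξ) →
      (∀ f ∈ ξ, ∃ g ∈ ξ, ∃ c : ℝ, Dop f = g + PowerSeries.C c) →
      ∃ k : ℕ, 1 ≤ k ∧
        ξ = Submodule.span ℝ
          ((fun i : ℕ => (PowerSeries.X : PowerSeries ℝ) ^ i) '' Set.Icc 1 k) := by
    intro ξ hFD hne h0 hXD hD
    have hE : ∀ f ∈ ξ, Eop f ∈ ξ := by
      intro f hf; rw [Eop_eq]; exact hXD f hf
    -- the set of exponents
    set S : Set ℕ := {n : ℕ | 1 ≤ n ∧ (PowerSeries.X : PowerSeries ℝ) ^ n ∈ ξ} with hSdef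
    have hSfin : S.Finite := (finite_pow_set ξ).subset (fun n hn => hn.2)
    have hSne : S.Nonempty := by
      obtain ⟨f, hf, hf0⟩ := Submodule.exists_mem_ne_zero_of_ne_bot hne
      obtain ⟨n, hn⟩ : ∃ n, PowerSeries.coeff n f ≠ 0 := by
        by_contra hc
        push_neg at hc
        exact hf0 (PowerSeries.ext fun n => by rw [hc n, map_zero])
      have hn1 : 1 ≤ n := by
        rcases Nat.eq_zero_or_pos n with h | h
        · exfalso; apply hn; subst h
          rw [PowerSeries.coeff_zero_eq_constantCoeff]; exact h0 f hf
        · exact h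
      exact ⟨n, hn1, Xpow_mem ξ hE hf hn⟩
    set k := hSfin.toFinset.max' (by simpa using hSne) with hk
    have hkS : k ∈ S := by
      have := hSfin.toFinset.max'_mem (by simpa using hSne)
      simpa using this
    have hle : ∀ n ∈ S, n ≤ k := by
      intro n hn
      exact hSfin.toFinset.le_max' n (by simpa using hn)
    -- downward step
    have down : ∀ n : ℕ, 1 ≤ n → (PowerSeries.X : PowerSeries ℝ) ^ (n + 1) ∈ ξ →
        (PowerSeries.X : PowerSeries ℝ) ^ n ∈ ξ := by
      intro n hn1 hmem
      obtain ⟨g, hg, c, hc⟩ := hD _ hmem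
      rw [Dop_Xpow] at hc
      have hc0 : c = 0 := by
        have h1 := congrArg (PowerSeries.constantCoeff) hc
        rw [map_add, PowerSeries.constantCoeff_C, h0 g hg, zero_add] at h1
        rw [← h1, ← PowerSeries.coeff_zero_eq_constantCoeff_apply, PowerSeries.coeff_smul,
          PowerSeries.coeff_X_pow, if_neg (by omega : ¬(0 : ℕ) = n)]
        simp
      rw [hc0, map_zero, add_zero] at hc
      have hg' : ((n : ℝ) + 1)⁻¹ • g ∈ ξ := ξ.smul_mem _ hg
      rw [← hc, smul_smul, inv_mul_cancel₀ (by positivity), one_smul] at hg'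
      exact hg'
    have hall : ∀ d : ℕ, ∀ i : ℕ, i + d = k → 1 ≤ i →
        (PowerSeries.X : PowerSeries ℝ) ^ i ∈ ξ := by
      intro d
      induction d with
      | zero => intro i hik _; rw [Nat.add_zero] at hik; subst hik; exact hkS.2
      | succ d ih =>
          intro i hik hi1
          have := ih (i + 1) (by omega) (by omega)
          exact down i hi1 this
    refine ⟨k, hkS.1, le_antisymm ?_ ?_⟩
    · -- ξ ≤ span
      intro f hf
      have hcoeff0 : ∀ m : ℕ, m ∉ Finset.Icc 1 k → PowerSeries.coeff m f = 0 := by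
        intro m hm
        by_contra hmf
        have hm1 : 1 ≤ m := by
          rcases Nat.eq_zero_or_pos m with h | h
          · exfalso; apply hmf; subst h
            rw [PowerSeries.coeff_zero_eq_constantCoeff]; exact h0 f hf
          · exact h
        have : m ∈ S := ⟨hm1, Xpow_mem ξ hE hf hmf⟩
        exact hm (Finset.mem_Icc.mpr ⟨hm1, hle m this⟩)
      have hrepr : f = ∑ i ∈ Finset.Icc 1 k,
          (PowerSeries.coeff i f) • (PowerSeries.X : PowerSeries ℝ) ^ i := by
        ext m
        rw [map_sum]
        simp only [PowerSeries.coeff_smul, PowerSeries.coeff_X_pow, smul_eq_mul]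
        rw [Finset.sum_congr rfl (fun i _ => by rw [mul_ite, mul_one, mul_zero])]
        rw [Finset.sum_ite_eq (Finset.Icc 1 k) m (fun i => PowerSeries.coeff i f)]
        by_cases hm : m ∈ Finset.Icc 1 k
        · rw [if_pos hm]
        · rw [if_neg hm, hcoeff0 m hm]
      rw [hrepr]
      apply Submodule.sum_mem
      intro i hi
      apply Submodule.smul_mem
      apply Submodule.subset_span
      exact ⟨i, by simpa using hi, rfl⟩
    · -- span ≤ ξ
      rw [Submodule.span_le]
      rintro _ ⟨i, hi, rfl⟩
      rw [Set.mem_Icc] at hi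
      exact hall (k - i) i (by omega) hi.1
  constructor
  · exact part1
  · rintro ⟨ξ, hFD, hne, h0, hXD, hD, hF⟩
    obtain ⟨k, hk1, hspan⟩ := part1 ξ hFD hne h0 hXD hD
    have hXk : (PowerSeries.X : PowerSeries ℝ) ^ k ∈ ξ := by
      rw [hspan]
      exact Submodule.subset_span ⟨k, Set.mem_Icc.mpr ⟨hk1, le_refl k⟩, rfl⟩
    have hmem := hF _ hXk
    obtain ⟨m, rfl⟩ : ∃ m, k = m + 1 := ⟨k - 1, by omega⟩
    have hcalc : (PowerSeries.X : PowerSeries ℝ) ^ 2 * Dop (PowerSeries.X ^ (m + 1))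
        = ((m : ℝ) + 1) • (PowerSeries.X : PowerSeries ℝ) ^ (m + 2) := by
      rw [Dop_Xpow, mul_smul_comm, ← pow_add, add_comm 2 m]
    rw [hcalc] at hmem
    have hXk1 : (PowerSeries.X : PowerSeries ℝ) ^ (m + 2) ∈ ξ := by
      have := ξ.smul_mem ((m : ℝ) + 1)⁻¹ hmem
      rwa [smul_smul, inv_mul_cancel₀ (by positivity), one_smul] at this
    rw [hspan] at hXk1
    have hnot := lin_indep_Xpow.notMem_span_image
      (s := Set.Icc 1 (m + 1)) (x := m + 2)
      (by intro hmem2; exact absurd (Set.mem_Icc.mp hmem2).2 (by omega))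
    exact hnot hXk1
end
end

section
/- Let (g, ω) be a symplectic Lie algebra. Then there is a unique bilinear product (x, y) ↦ x∘y on g satisfying ω(x∘y, z) = -ω(y, [x, z]) for all x, y, z ∈ g, and this product is a compatible left-symmetric structure: it satisfies (x∘y)∘z - x∘(y∘z) = (y∘x)∘z - y∘(x∘z) (left-symmetry) and x∘y - y∘x = [x, y] for all x, y, z ∈ g. -/
noncomputable section

/-- a symplectic Lie algebra `(g, ω)` carries a unique bilinear product
with `ω(x∘y, z) = -ω(y, [x,z])`, and this product is a compatible left-symmetric
structure. -/
theorem symplectic_lie_algebra_left_symmetric_product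
    {g : Type*} [LieRing g] [LieAlgebra ℝ g] [FiniteDimensional ℝ g]
    (ω : g →ₗ[ℝ] g →ₗ[ℝ] ℝ)
    (halt : ∀ x : g, ω x x = 0)
    (hnondeg : ∀ x : g, (∀ y : g, ω x y = 0) → x = 0)
    (hcocycle : ∀ x y z : g, ω ⁅x, y⁆ z + ω ⁅y, z⁆ x + ω ⁅z, x⁆ y = 0) :
    (∃! P : g →ₗ[ℝ] g →ₗ[ℝ] g, ∀ x y z : g, ω (P x y) z = - ω y ⁅x, z⁆) ∧
    (∀ P : g →ₗ[ℝ] g →ₗ[ℝ] g, (∀ x y z : g, ω (P x y) z = - ω y ⁅x, z⁆) →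
      ((∀ x y z : g, P (P x y) z - P x (P y z) = P (P y x) z - P y (P x z)) ∧
       (∀ x y : g, P x y - P y x = ⁅x, y⁆))) := by
  have hskew : ∀ x y : g, ω x y = - ω y x := by
    intro x y
    have h := halt (x + y)
    simp only [map_add, LinearMap.add_apply, halt x, halt y] at h
    linarith
  -- the map g → Dual g induced by ω is bijective
  have hinj : Function.Injective ω := by
    intro x y hxy
    rw [← sub_eq_zero]
    exact hnondeg _ (fun z => by
      have : ω x z = ω y z := by rw [hxy]
      simp [map_sub, this])
  have hsurj : Function.Surjective ω := by
    have hfin : Module.finrank ℝ g = Module.finrank ℝ (Module.Dual ℝ g) :=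
      (Subspace.dual_finrank_eq (K := ℝ) (V := g)).symm
    exact (LinearMap.injective_iff_surjective_of_finrank_eq_finrank hfin).mp hinj
  let e : g ≃ₗ[ℝ] Module.Dual ℝ g := LinearEquiv.ofBijective ω ⟨hinj, hsurj⟩
  have he : ∀ x : g, e x = ω x := fun _ => rfl
  -- the bilinear map (x, y) ↦ (z ↦ -ω y ⁅x, z⁆)
  let F : g →ₗ[ℝ] g →ₗ[ℝ] Module.Dual ℝ g :=
    LinearMap.mk₂ ℝ (fun x y => -((ω y).comp ((LieAlgebra.ad ℝ g) x)))
      (by intro x x' y; ext z; simp; ring)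
      (by intro c x y; ext z; simp)
      (by intro x y y'; ext z; simp; ring)
      (by intro c x y; ext z; simp)
  let P₀ : g →ₗ[ℝ] g →ₗ[ℝ] g := F.compr₂ (e.symm : Module.Dual ℝ g →ₗ[ℝ] g)
  have hP₀ : ∀ x y z : g, ω (P₀ x y) z = - ω y ⁅x, z⁆ := by
    intro x y z
    have : ω (P₀ x y) = F x y := by
      have := e.apply_symm_apply (F x y)
      simpa [he, P₀] using this
    rw [this]
    simp [F, LieAlgebra.ad_apply]
  -- the main computation for any P satisfying the identity
  have main : ∀ P : g →ₗ[ℝ] g →ₗ[ℝ] g, (∀ x y z : g, ω (P x y) z = - ω y ⁅x, z⁆) →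
      ((∀ x y z : g, P (P x y) z - P x (P y z) = P (P y x) z - P y (P x z)) ∧
       (∀ x y : g, P x y - P y x = ⁅x, y⁆)) := by
    intro P hP
    have hcomp : ∀ x y : g, P x y - P y x = ⁅x, y⁆ := by
      intro x y
      rw [← sub_eq_zero]
      apply hnondeg
      intro z
      have hc := hcocycle x y z
      have h1 : ω ⁅z, x⁆ y = - ω ⁅x, z⁆ y := by
        rw [show ⁅z, x⁆ = -⁅x, z⁆ from neg_eq_iff_eq_neg.mp (lie_skew x z)]
        rw [map_neg, LinearMap.neg_apply]
      have h2 : ω y ⁅x, z⁆ = - ω ⁅x, z⁆ y := hskew _ _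
      have h3 : ω x ⁅y, z⁆ = - ω ⁅y, z⁆ x := hskew _ _
      simp only [LinearMap.map_sub, LinearMap.sub_apply, hP x y z, hP y x z, h2, h3]
      rw [h1] at hc
      linarith
    refine ⟨?_, hcomp⟩
    intro x y z
    rw [← sub_eq_zero, show P (P x y) z - P x (P y z) - (P (P y x) z - P y (P x z)) =
        P (P x y - P y x) z - P x (P y z) + P y (P x z) by
      simp only [map_sub, LinearMap.sub_apply]; abel]
    apply hnondeg
    intro w
    have e1 : ω (P (P x y - P y x) z) w = - ω z ⁅⁅x, y⁆, w⁆ := by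
      rw [hcomp x y, hP]
    have e2 : ω (P x (P y z)) w = ω z ⁅y, ⁅x, w⁆⁆ := by
      rw [hP x (P y z) w, hP y z ⁅x, w⁆]; ring
    have e3 : ω (P y (P x z)) w = ω z ⁅x, ⁅y, w⁆⁆ := by
      rw [hP y (P x z) w, hP x z ⁅y, w⁆]; ring
    have jac : ω z ⁅x, ⁅y, w⁆⁆ = ω z ⁅⁅x, y⁆, w⁆ + ω z ⁅y, ⁅x, w⁆⁆ := by
      rw [leibniz_lie x y w]; simp
    simp only [map_sub, LinearMap.sub_apply] at e1
    simp only [map_add, map_sub, LinearMap.add_apply, LinearMap.sub_apply, e2, e3]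
    linarith
  refine ⟨⟨P₀, hP₀, ?_⟩, main⟩
  intro Q hQ
  ext x y
  rw [← sub_eq_zero]
  apply hnondeg
  intro z
  simp only [map_sub, LinearMap.sub_apply, hQ x y z, hP₀ x y z, sub_self]
end
end

section
/- Let (g, ω) be a symplectic Lie algebra with compatible left-symmetric product ∘, and set L_x(y) = x∘y and R_x(y) = y∘x. Then for all x, y, z ∈ g: (1) ω(x∘y, z) + ω(z∘y, x) = 0; (2) ω(x∘y, z) + ω(y∘z, x) + ω(z∘x, y) = 0; (3) tr(R_x ∘ R_y) = tr(R_{x∘y}) = 2·tr(L_{x∘y}); (4) tr(R_x ∘ R_y) = 2·tr(R_y ∘ L_x) = 2·tr(R_x ∘ L_y), where tr denotes the trace of a linear endomorphism of g. -/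
noncomputable section

open LinearMap Module

/-- If `A` and `B` are adjoint with respect to a nondegenerate bilinear form on a
finite-dimensional space, then they have the same trace. -/
lemma trace_eq_of_adjoint' {g : Type*} [AddCommGroup g] [Module ℝ g] [FiniteDimensional ℝ g]
    (ω : LinearMap.BilinForm ℝ g) (hnd : ω.Nondegenerate)
    (A B : g →ₗ[ℝ] g) (h : ∀ u v : g, ω (A u) v = ω u (B v)) :
    LinearMap.trace ℝ g A = LinearMap.trace ℝ g B := by
  set e := ω.toDual hnd with he
  have key : (e.conj A : Dual ℝ g →ₗ[ℝ] Dual ℝ g) = Module.Dual.transpose (R := ℝ) B := by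
    apply LinearMap.ext
    intro f
    apply LinearMap.ext
    intro v
    have h1 : e.conj A f = e (A (e.symm f)) := by
      simp [LinearEquiv.conj_apply]
    have h2 : (e (A (e.symm f))) v = ω (A (e.symm f)) v := rfl
    have h3 : ω (e.symm f) (B v) = (e (e.symm f)) (B v) := rfl
    rw [h1]
    rw [show (Module.Dual.transpose (R := ℝ) B) f = f ∘ₗ B from rfl]
    rw [h2, h (e.symm f) v, h3, e.apply_symm_apply]
    rfl
  calc LinearMap.trace ℝ g A = LinearMap.trace ℝ (Dual ℝ g) (e.conj A) :=
        (LinearMap.trace_conj' A e).symm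
    _ = LinearMap.trace ℝ (Dual ℝ g) (Module.Dual.transpose (R := ℝ) B) := by rw [key]
    _ = LinearMap.trace ℝ g B := LinearMap.trace_transpose' B

/-- trace identities for the compatible left-symmetric product of a
symplectic Lie algebra.  Here `P x y = x∘y`, `L_x = P x` and `R_x = P.flip x`. -/
theorem symplectic_lie_algebra_trace_identities
    {g : Type*} [LieRing g] [LieAlgebra ℝ g] [FiniteDimensional ℝ g]
    (ω : g →ₗ[ℝ] g →ₗ[ℝ] ℝ)
    (halt : ∀ x : g, ω x x = 0)
    (hnondeg : ∀ x : g, (∀ y : g, ω x y = 0) → x = 0)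
    (hcocycle : ∀ x y z : g, ω ⁅x, y⁆ z + ω ⁅y, z⁆ x + ω ⁅z, x⁆ y = 0)
    (P : g →ₗ[ℝ] g →ₗ[ℝ] g)
    (hdef : ∀ x y z : g, ω (P x y) z = - ω y ⁅x, z⁆)
    (hls : ∀ x y z : g, P (P x y) z - P x (P y z) = P (P y x) z - P y (P x z))
    (hcomp : ∀ x y : g, P x y - P y x = ⁅x, y⁆) :
    (∀ x y z : g, ω (P x y) z + ω (P z y) x = 0) ∧
    (∀ x y z : g, ω (P x y) z + ω (P y z) x + ω (P z x) y = 0) ∧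
    (∀ x y : g,
      LinearMap.trace ℝ g (P.flip x ∘ₗ P.flip y) = LinearMap.trace ℝ g (P.flip (P x y)) ∧
      LinearMap.trace ℝ g (P.flip (P x y)) = 2 * LinearMap.trace ℝ g (P (P x y))) ∧
    (∀ x y : g,
      LinearMap.trace ℝ g (P.flip x ∘ₗ P.flip y) = 2 * LinearMap.trace ℝ g (P.flip y ∘ₗ P x) ∧
      LinearMap.trace ℝ g (P.flip x ∘ₗ P.flip y) = 2 * LinearMap.trace ℝ g (P.flip x ∘ₗ P y)) := by
  set T := LinearMap.trace ℝ g with hT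
  -- antisymmetry of ω
  have hanti : ∀ a b : g, ω a b = - ω b a := by
    intro a b
    have h := halt (a + b)
    simp only [map_add, LinearMap.add_apply, halt] at h
    linarith
  -- (1)
  have h1 : ∀ x y z : g, ω (P x y) z + ω (P z y) x = 0 := by
    intro x y z
    rw [hdef, hdef, ← lie_skew x z, map_neg]
    ring
  -- (2)
  have h2 : ∀ x y z : g, ω (P x y) z + ω (P y z) x + ω (P z x) y = 0 := by
    intro x y z
    have hc := hcocycle x z y
    rw [hdef x y z, hdef y z x, hdef z x y]
    linarith [hanti y ⁅x, z⁆, hanti z ⁅y, x⁆, hanti x ⁅z, y⁆]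
  -- R_w is ω-self-adjoint
  have hRadj : ∀ w u v : g, ω (P u w) v = ω u (P v w) := by
    intro w u v
    have := h1 u w v
    linarith [hanti u (P v w)]
  -- adjoint of L_w is R_w - L_w
  have hLadj : ∀ w u v : g, ω (P w u) v = ω u (P v w - P w v) := by
    intro w u v
    rw [hdef, ← hcomp w v, map_sub]
    simp only [map_sub, LinearMap.sub_apply]
    ring
  -- trace of adjoint equals trace
  have htr : ∀ A B : g →ₗ[ℝ] g, (∀ u v : g, ω (A u) v = ω u (B v)) → T A = T B :=
    fun A B h => trace_eq_of_adjoint' ω ⟨hnondeg, fun y hy => hnondeg y (fun x => by rw [hanti, hy x, neg_zero])⟩ A B h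
  -- tr R_z = 2 tr L_z
  have htrRL : ∀ z : g, T (P.flip z) = 2 * T (P z) := by
    intro z
    have h := htr (P z) (P.flip z - P z) (by
      intro u v
      simp only [LinearMap.sub_apply, LinearMap.flip_apply]
      exact hLadj z u v)
    rw [map_sub] at h
    linarith
  -- the key operator identity R_{a∘c} = R_c R_a - R_c L_a + L_a R_c
  have hop : ∀ a c : g, P.flip (P a c)
      = P.flip c ∘ₗ P.flip a - P.flip c ∘ₗ P a + P a ∘ₗ P.flip c := by
    intro a c
    apply LinearMap.ext
    intro b
    simp only [LinearMap.add_apply, LinearMap.sub_apply, LinearMap.comp_apply,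
      LinearMap.flip_apply]
    have h := hls b a c
    have h' : P b (P a c) = P (P b a) c - (P (P b a) c - P b (P a c)) := by abel
    rw [h', h]
    abel
  refine ⟨h1, h2, ?_, ?_⟩
  · intro x y
    constructor
    · rw [hop x y, map_add, map_sub]
      rw [LinearMap.trace_comp_comm' (P.flip y) (P x)]
      rw [LinearMap.trace_comp_comm' (P.flip x) (P.flip y)]
      ring
    · exact htrRL (P x y)
  · intro x y
    have hx := htr (P.flip y ∘ₗ P x) ((P.flip x - P x) ∘ₗ P.flip y) (by
      intro u v
      simp only [LinearMap.comp_apply, LinearMap.sub_apply, LinearMap.flip_apply]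
      rw [hRadj y (P x u) v]
      exact hLadj x u (P v y))
    have hy := htr (P.flip x ∘ₗ P y) ((P.flip y - P y) ∘ₗ P.flip x) (by
      intro u v
      simp only [LinearMap.comp_apply, LinearMap.sub_apply, LinearMap.flip_apply]
      rw [hRadj x (P y u) v]
      exact hLadj y u (P v x))
    rw [LinearMap.sub_comp, map_sub] at hx hy
    have c1 := LinearMap.trace_comp_comm' (P x) (P.flip y)
    have c2 := LinearMap.trace_comp_comm' (P y) (P.flip x)
    have c3 := LinearMap.trace_comp_comm' (P.flip x) (P.flip y)
    constructor
    · -- T (Rx ∘ Ry) = 2 * T (Ry ∘ Lx)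
      rw [hT] at *
      linarith
    · rw [hT] at *
      linarith
end
end

section
/- Let (g, ω) be a symplectic Lie algebra with compatible left-symmetric product ∘, L_x(y) = x∘y, and define the left trace form κ(x, y) = tr(L_x ∘ L_y). Then: (1) if κ = 0 (identically), the Lie algebra g is solvable; (2) if the Lie algebra g is nilpotent, then κ = 0. -/
noncomputable section

open LieAlgebra LieModule Module LinearMap
open scoped DirectSum

section Cartan

variable {K : Type*} [Field K] [IsAlgClosed K] [CharZero K]
  {L : Type*} [LieRing L] [LieAlgebra K L] [FiniteDimensional K L]

private lemma aux_nilpotent_ad (hkill : ∀ x y : L, killingForm K L x y = 0)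
    {z : L} (hz : z ∈ LieAlgebra.derivedSeries K L 1) :
    IsNilpotent (LieModule.toEnd K L L z) := by
  classical
  set D := LieModule.toEnd K L L z with hD
  set V : K → Submodule K L := fun μ => D.maxGenEigenspace μ with hV
  have hindep := D.independent_maxGenEigenspace
  have hsup : ⨆ μ, V μ = ⊤ := D.iSup_maxGenEigenspace_eq_top
  have hds : DirectSum.IsInternal V :=
    DirectSum.isInternal_submodule_of_iSupIndep_of_iSup_eq_top hindep hsup
  have hfin : {μ | V μ ≠ ⊥}.Finite := WellFoundedGT.finite_ne_bot_of_iSupIndep hindep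
  -- replace `hz` by span-membership
  replace hz : z ∈ Submodule.span K {m : L | ∃ u v : L, ⁅u, v⁆ = m} := by
    rw [LieAlgebra.derivedSeries_def, LieAlgebra.derivedSeriesOfIdeal_succ,
      LieAlgebra.derivedSeriesOfIdeal_zero, ← LieSubmodule.mem_toSubmodule,
      LieSubmodule.lieIdeal_oper_eq_linear_span'] at hz
    simpa using hz
  -- key claim : every potential eigenvalue is killed by every rational functional
  have key : ∀ φ : Module.Dual ℚ K, ∀ μ ∈ hfin.toFinset, φ μ = 0 := by
    intro φ
    set e : (⨁ μ : K, V μ) ≃ₗ[K] L :=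
      LinearEquiv.ofBijective (DirectSum.coeLinearMap V) hds with he
    set proj : K → (L →ₗ[K] L) := fun μ =>
      (V μ).subtype ∘ₗ (DirectSum.component K K (fun ν => ↥(V ν)) μ) ∘ₗ
        (e.symm : L →ₗ[K] ⨁ μ : K, V μ) with hprojdef
    have hproj : ∀ (μ ν : K) (v : L), v ∈ V ν → proj μ v = if ν = μ then v else 0 := by
      intro μ ν v hv
      have h1 : proj μ v = ↑((e.symm v) μ) := rfl
      by_cases h : ν = μ
      · subst h
        rw [h1, hds.ofBijective_coeLinearMap_of_mem hv, if_pos rfl]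
      · rw [h1, if_neg h]
        have := hds.ofBijective_coeLinearMap_of_ne (i := ν) (j := μ) h ⟨v, hv⟩
        rw [this]; rfl
    set S : L →ₗ[K] L := ∑ μ ∈ hfin.toFinset, ((φ μ : ℚ) : K) • proj μ with hS
    have hSv : ∀ (ν : K) (v : L), v ∈ V ν → S v = ((φ ν : ℚ) : K) • v := by
      intro ν v hv
      by_cases hb : V ν = ⊥
      · have hv0 : v = 0 := by simpa [hb] using hv
        simp [hv0]
      · have hmem : ν ∈ hfin.toFinset := by simpa using hb
        rw [hS]
        simp only [LinearMap.coe_sum, Finset.sum_apply, LinearMap.smul_apply]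
        rw [Finset.sum_eq_single ν]
        · rw [hproj ν ν v hv, if_pos rfl]
        · intro b _ hbν
          rw [hproj b ν v hv, if_neg (fun h => hbν h.symm), smul_zero]
        · intro habs; exact absurd hmem habs
    have hSmapsto : ∀ ν : K, Set.MapsTo S (V ν) (V ν) := by
      intro ν v hv
      rw [hSv ν v hv]
      exact Submodule.smul_mem _ _ hv
    -- S is a derivation
    have hder : ∀ u v : L, S ⁅u, v⁆ = ⁅S u, v⁆ + ⁅u, S v⁆ := by
      have hmemtop : ∀ w : L, w ∈ ⨆ μ, V μ := by rw [hsup]; exact fun w => trivial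
      intro u v
      refine Submodule.iSup_induction V (motive := fun u => ∀ v', v' ∈ ⨆ μ, V μ →
          S ⁅u, v'⁆ = ⁅S u, v'⁆ + ⁅u, S v'⁆) (hmemtop u) ?_ ?_ ?_ v (hmemtop v)
      · intro ν u hu v' hv'
        refine Submodule.iSup_induction V (motive := fun v' =>
            S ⁅u, v'⁆ = ⁅S u, v'⁆ + ⁅u, S v'⁆) hv' ?_ ?_ ?_
        · intro μ w hw
          have hbr : ⁅u, w⁆ ∈ V (ν + μ) :=
            LieModule.lie_mem_maxGenEigenspace_toEnd hu hw
          rw [hSv _ _ hbr, hSv _ _ hu, hSv _ _ hw, map_add, smul_lie, lie_smul]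
          push_cast
          rw [add_smul]
        · simp
        · intro a b ha hb
          simp only [lie_add, map_add, ha, hb]
          abel
      · intro v' _; simp
      · intro a b ha hb v' hv'
        simp only [add_lie, map_add, ha v' hv', hb v' hv']
        abel
    have hcommS : ∀ y : L, LieModule.toEnd K L L (S y) =
        S * LieModule.toEnd K L L y - LieModule.toEnd K L L y * S := by
      intro y
      ext v
      have := hder y v
      simp only [LieModule.toEnd_apply_apply, LinearMap.sub_apply, Module.End.mul_apply,
        LieModule.toEnd_apply_apply]
      rw [this]; abel
    -- trace of D * S vanishes thanks to the Killing-form hypothesis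
    have hlin : ∀ w ∈ Submodule.span K {m : L | ∃ u v : L, ⁅u, v⁆ = m},
        trace K L (LieModule.toEnd K L L w * S) = 0 := by
      intro w hw
      induction hw using Submodule.span_induction with
      | mem w hw =>
          obtain ⟨x, y, rfl⟩ := hw
          have hxy : LieModule.toEnd K L L ⁅x, y⁆ =
              LieModule.toEnd K L L x * LieModule.toEnd K L L y -
                LieModule.toEnd K L L y * LieModule.toEnd K L L x := by
            ext v; simp only [LieModule.toEnd_apply_apply, LinearMap.sub_apply, Module.End.mul_apply, lie_lie]
          rw [hxy, sub_mul, map_sub]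
          set A := LieModule.toEnd K L L x
          set B := LieModule.toEnd K L L y
          have h1 : trace K L (B * A * S) = trace K L (A * S * B) := by
            rw [mul_assoc, trace_mul_comm]
          have h2 : trace K L (A * B * S) - trace K L (A * S * B) =
              trace K L (A * (B * S - S * B)) := by
            rw [mul_sub, map_sub, mul_assoc, mul_assoc]
          have h3 : B * S - S * B = - LieModule.toEnd K L L (S y) := by
            rw [hcommS y]; abel
          rw [h1, h2, h3, mul_neg, map_neg]
          have h4 : trace K L (A * LieModule.toEnd K L L (S y)) =
              killingForm K L x (S y) := by
            rw [killingForm_apply_apply]; rfl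
          rw [h4, hkill, neg_zero]
      | zero => simp
      | add a b _ _ ha hb => rw [map_add, add_mul, map_add, ha, hb, add_zero]
      | smul c a _ ha => rw [map_smul, smul_mul_assoc, map_smul, ha, smul_zero]
    have htr0 : trace K L (D * S) = 0 := hlin z hz
    -- trace of D * S as a sum over eigenvalues
    have hDmapsto : ∀ ν : K, Set.MapsTo D (V ν) (V ν) := fun ν =>
      Module.End.mapsTo_maxGenEigenspace_of_comm (Commute.refl D) ν
    have hDSmapsto : ∀ ν : K, Set.MapsTo (D * S) (V ν) (V ν) := fun ν =>
      (hDmapsto ν).comp (hSmapsto ν)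
    have htrsum : trace K L (D * S) =
        ∑ μ ∈ hfin.toFinset, ((φ μ : ℚ) : K) * (μ * (finrank K (V μ) : K)) := by
      rw [trace_eq_sum_trace_restrict' hds hfin hDSmapsto]
      refine Finset.sum_congr rfl fun μ hμ => ?_
      have hres : (D * S).restrict (hDSmapsto μ) =
          ((φ μ : ℚ) : K) • (D.restrict (hDmapsto μ)) := by
        ext ⟨v, hv⟩
        have : (D * S) v = ((φ μ : ℚ) : K) • D v := by
          rw [Module.End.mul_apply, hSv μ v hv, map_smul]
        exact this
      rw [hres, map_smul, smul_eq_mul]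
      congr 1
      -- trace of D restricted to a generalized eigenspace
      have hnil : IsNilpotent (D.restrict (hDmapsto μ) - μ • 1) := by
        have hmapsub : ∀ x ∈ V μ, (D - μ • 1) x ∈ V μ := by
          intro x hx
          have h1 : D x ∈ V μ := hDmapsto μ hx
          have h2 : (μ • (1 : Module.End K L)) x ∈ V μ := by
            simpa using Submodule.smul_mem _ μ hx
          simpa [LinearMap.sub_apply] using Submodule.sub_mem _ h1 h2
        have heq : D.restrict (hDmapsto μ) - μ • 1 = (D - μ • 1).restrict hmapsub := by
          ext ⟨v, hv⟩
          simp [LinearMap.restrict_apply, LinearMap.restrict_coe_apply, LinearMap.sub_apply]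
          rfl
        rw [heq]
        refine ⟨finrank K L, ?_⟩
        rw [Module.End.pow_restrict]
        ext ⟨v, hv⟩
        have hv' : v ∈ D.genEigenspace μ (finrank K L : ℕ∞) := by
          rw [← Module.End.maxGenEigenspace_eq_genEigenspace_finrank]
          exact hv
        rw [Module.End.genEigenspace_nat] at hv'
        have : ((D - μ • 1) ^ finrank K L) v = 0 := by
          simpa [Module.algebraMap_end_eq_smul_id] using hv'
        simp [LinearMap.restrict_apply, this]
      have htrnil : trace K (V μ) (D.restrict (hDmapsto μ) - μ • 1) = 0 := by
        rw [← isNilpotent_iff_eq_zero]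
        exact isNilpotent_trace_of_isNilpotent hnil
      have : trace K (V μ) (D.restrict (hDmapsto μ)) =
          trace K (V μ) (μ • (1 : Module.End K (V μ))) := by
        have h' := htrnil
        rw [map_sub, sub_eq_zero] at h'
        exact h'
      rw [this, map_smul, trace_one, smul_eq_mul]
    -- combine
    rw [htr0] at htrsum
    -- apply φ
    have hsum0 : ∑ μ ∈ hfin.toFinset, ((finrank K (V μ) : ℚ) * (φ μ) ^ 2) = 0 := by
      have happ := congrArg φ htrsum.symm
      rw [map_zero] at happ
      rw [map_sum] at happ
      have : ∀ μ ∈ hfin.toFinset,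
          φ (((φ μ : ℚ) : K) * (μ * (finrank K (V μ) : K))) =
            (finrank K (V μ) : ℚ) * (φ μ) ^ 2 := by
        intro μ _
        have h1 : ((φ μ : ℚ) : K) * (μ * (finrank K (V μ) : K)) =
            ((φ μ * (finrank K (V μ) : ℚ)) : ℚ) • μ := by
          rw [Rat.smul_def]
          push_cast
          ring
        rw [h1, map_smul, smul_eq_mul]
        ring
      rw [Finset.sum_congr rfl this] at happ
      exact happ
    intro μ hμ
    have hnonneg : ∀ μ ∈ hfin.toFinset, 0 ≤ (finrank K (V μ) : ℚ) * (φ μ) ^ 2 :=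
      fun μ _ => mul_nonneg (by positivity) (sq_nonneg _)
    have hzero := (Finset.sum_eq_zero_iff_of_nonneg hnonneg).mp hsum0 μ hμ
    have hpos : 0 < finrank K (V μ) := by
      apply finrank_pos_iff.mpr
      have : V μ ≠ ⊥ := by simpa using hμ
      exact Submodule.nontrivial_iff_ne_bot.mpr this
    have h2 : (φ μ) ^ 2 = 0 := by
      have hfr : (finrank K (V μ) : ℚ) ≠ 0 := Nat.cast_ne_zero.mpr hpos.ne'
      exact (mul_eq_zero.mp hzero).resolve_left hfr
    exact pow_eq_zero_iff (n := 2) (by norm_num) |>.mp h2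
  -- all eigenvalues vanish
  have hV0 : V 0 = ⊤ := by
    have hbot : ∀ μ : K, μ ≠ 0 → V μ = ⊥ := by
      intro μ hμ
      by_contra hb
      have hmem : μ ∈ hfin.toFinset := by simpa using hb
      have : μ = 0 := by
        have hall : ∀ φ : Module.Dual ℚ K, φ μ = 0 := fun φ => key φ μ hmem
        exact (Module.forall_dual_apply_eq_zero_iff ℚ μ).mp hall
      exact hμ this
    refine le_antisymm le_top ?_
    rw [← hsup]
    exact iSup_le fun μ => by
      by_cases h : μ = 0
      · rw [h]
      · rw [hbot μ h]; exact bot_le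
  refine ⟨finrank K L, ?_⟩
  ext v
  have hv : v ∈ D.maxGenEigenspace 0 := by
    have h : v ∈ V 0 := hV0 ▸ Submodule.mem_top
    exact h
  rw [Module.End.maxGenEigenspace_eq_genEigenspace_finrank, Module.End.genEigenspace_nat] at hv
  simpa using hv

private lemma cartan_solvable (hkill : ∀ x y : L, killingForm K L x y = 0) :
    LieAlgebra.IsSolvable L := by
  set I : LieIdeal K L := LieAlgebra.derivedSeries K L 1 with hI
  have had : ∀ x : ↥I, IsNilpotent (LieAlgebra.ad K ↥I x) := by
    intro x
    obtain ⟨n, hn⟩ := aux_nilpotent_ad hkill x.2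
    refine ⟨n, ?_⟩
    ext y
    have hcoe : ∀ (m : ℕ) (y : ↥I),
        ((((LieAlgebra.ad K ↥I x) ^ m) y : ↥I) : L) =
          ((LieModule.toEnd K L L (x : L)) ^ m) (y : L) := by
      intro m
      induction m with
      | zero => intro y; simp
      | succ m ih =>
          intro y
          rw [pow_succ', pow_succ', Module.End.mul_apply, Module.End.mul_apply]
          have hcoe1 : (((LieAlgebra.ad K ↥I x) (((LieAlgebra.ad K ↥I x) ^ m) y) : ↥I) : L)
              = ⁅(x : L), ((((LieAlgebra.ad K ↥I x) ^ m) y : ↥I) : L)⁆ := rfl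
          rw [hcoe1, ih y]
          simp [LieModule.toEnd_apply_apply]
    have := hcoe n y
    rw [hn] at this
    simpa using this
  have hnilI : LieRing.IsNilpotent ↥I :=
    (LieAlgebra.isNilpotent_iff_forall (R := K) (L := ↥I)).mpr had
  have hsolvI : LieAlgebra.IsSolvable ↥I := inferInstance
  obtain ⟨k, hk⟩ := LieAlgebra.IsSolvable.solvable (R := K) (L := ↥I)
  rw [LieIdeal.derivedSeries_eq_bot_iff] at hk
  refine LieAlgebra.IsSolvable.mk (R := K) (k := k + 1) ?_
  rw [LieAlgebra.derivedSeries_def, LieAlgebra.derivedSeriesOfIdeal_add ⊤ k 1,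
    ← LieAlgebra.derivedSeries_def]
  exact hk

end Cartan

section Transfer

private lemma real_solvable_of_killing_zero {g : Type*} [LieRing g] [LieAlgebra ℝ g]
    [FiniteDimensional ℝ g] (hkill : ∀ x y : g, killingForm ℝ g x y = 0) :
    LieAlgebra.IsSolvable g := by
  let Lc := TensorProduct ℝ ℂ g
  have hkillc : ∀ u v : Lc, killingForm ℂ Lc u v = 0 := by
    have base : ∀ x y : g, killingForm ℂ Lc ((1 : ℂ) ⊗ₜ[ℝ] x) ((1 : ℂ) ⊗ₜ[ℝ] y) = 0 := by
      intro x y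
      rw [killingForm_apply_apply]
      have h1 : LieAlgebra.ad ℂ Lc ((1 : ℂ) ⊗ₜ[ℝ] x) =
          LinearMap.baseChange ℂ (LieAlgebra.ad ℝ g x) := LieModule.toEnd_baseChange ℝ ℂ g g x
      have h2 : LieAlgebra.ad ℂ Lc ((1 : ℂ) ⊗ₜ[ℝ] y) =
          LinearMap.baseChange ℂ (LieAlgebra.ad ℝ g y) := LieModule.toEnd_baseChange ℝ ℂ g g y
      rw [h1, h2, ← LinearMap.baseChange_comp, LinearMap.trace_baseChange]
      have h3 : trace ℝ g (LieAlgebra.ad ℝ g x ∘ₗ LieAlgebra.ad ℝ g y) = killingForm ℝ g x y :=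
        (killingForm_apply_apply ℝ g x y).symm
      rw [h3, hkill, map_zero]
    intro u v
    induction u using TensorProduct.induction_on with
    | zero => simp
    | tmul a x =>
        induction v using TensorProduct.induction_on with
        | zero => simp
        | tmul b y =>
            have ha : (a ⊗ₜ[ℝ] x : Lc) = a • ((1 : ℂ) ⊗ₜ[ℝ] x) := by
              rw [TensorProduct.smul_tmul', smul_eq_mul, mul_one]
            have hb : (b ⊗ₜ[ℝ] y : Lc) = b • ((1 : ℂ) ⊗ₜ[ℝ] y) := by
              rw [TensorProduct.smul_tmul', smul_eq_mul, mul_one]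
            rw [ha, hb, LinearMap.map_smul₂, map_smul, base, smul_zero, smul_zero]
        | add v1 v2 h1 h2 => rw [map_add, h1, h2, add_zero]
    | add u1 u2 h1 h2 => rw [map_add, LinearMap.add_apply, h1, h2, add_zero]
  have hsolvc : LieAlgebra.IsSolvable Lc := cartan_solvable hkillc
  obtain ⟨k, hk⟩ := LieAlgebra.IsSolvable.solvable (R := ℂ) (L := Lc)
  have hmap : ∀ (n : ℕ) (x : g), x ∈ LieAlgebra.derivedSeries ℝ g n →
      ((1 : ℂ) ⊗ₜ[ℝ] x : Lc) ∈ LieAlgebra.derivedSeries ℂ Lc n := by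
    intro n
    induction n with
    | zero =>
        intro x _
        rw [LieAlgebra.derivedSeries_def, LieAlgebra.derivedSeriesOfIdeal_zero]
        exact LieSubmodule.mem_top _
    | succ n ih =>
        intro x hx
        have hx' : x ∈ Submodule.span ℝ {m : g | ∃ a ∈ LieAlgebra.derivedSeries ℝ g n,
            ∃ b ∈ LieAlgebra.derivedSeries ℝ g n, ⁅a, b⁆ = m} := by
          rw [LieAlgebra.derivedSeries_def, LieAlgebra.derivedSeriesOfIdeal_succ,
            ← LieSubmodule.mem_toSubmodule, LieSubmodule.lieIdeal_oper_eq_linear_span',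
            ← LieAlgebra.derivedSeries_def] at hx
          exact hx
        clear hx
        induction hx' using Submodule.span_induction with
        | mem m hm =>
            obtain ⟨a, ha, b, hb, rfl⟩ := hm
            have heq : ((1 : ℂ) ⊗ₜ[ℝ] ⁅a, b⁆ : Lc) =
                ⁅((1 : ℂ) ⊗ₜ[ℝ] a : Lc), ((1 : ℂ) ⊗ₜ[ℝ] b : Lc)⁆ := by
              rw [LieAlgebra.ExtendScalars.bracket_tmul, mul_one]
            rw [heq, LieAlgebra.derivedSeries_def, LieAlgebra.derivedSeriesOfIdeal_succ,
              ← LieAlgebra.derivedSeries_def]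
            exact LieSubmodule.lie_mem_lie (ih a ha) (ih b hb)
        | zero => simp
        | add v w _ _ hv hw =>
            rw [TensorProduct.tmul_add]
            exact add_mem hv hw
        | smul r v _ hv =>
            have heq : ((1 : ℂ) ⊗ₜ[ℝ] (r • v) : Lc) =
                (algebraMap ℝ ℂ r) • ((1 : ℂ) ⊗ₜ[ℝ] v : Lc) := by
              rw [TensorProduct.tmul_smul, algebraMap_smul]
            rw [heq]
            exact Submodule.smul_mem _ _ hv
  refine LieAlgebra.IsSolvable.mk (R := ℝ) (k := k) ?_
  rw [LieSubmodule.eq_bot_iff]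
  intro x hx
  have h1 := hmap k x hx
  rw [hk, LieSubmodule.mem_bot] at h1
  have h2 := congrArg (fun w : Lc =>
    (TensorProduct.lid ℝ g) ((LinearMap.rTensor g Complex.reLm) w)) h1
  simpa using h2

end Transfer

/-- for the compatible left-symmetric product of a symplectic Lie algebra,
vanishing of the left trace form `κ(x,y) = tr(L_x ∘ L_y)` implies solvability, and
nilpotency implies vanishing of `κ`. -/
theorem symplectic_lie_algebra_left_trace_form
    {g : Type*} [LieRing g] [LieAlgebra ℝ g] [FiniteDimensional ℝ g]
    (ω : g →ₗ[ℝ] g →ₗ[ℝ] ℝ)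
    (halt : ∀ x : g, ω x x = 0)
    (hnondeg : ∀ x : g, (∀ y : g, ω x y = 0) → x = 0)
    (hcocycle : ∀ x y z : g, ω ⁅x, y⁆ z + ω ⁅y, z⁆ x + ω ⁅z, x⁆ y = 0)
    (P : g →ₗ[ℝ] g →ₗ[ℝ] g)
    (hdef : ∀ x y z : g, ω (P x y) z = - ω y ⁅x, z⁆)
    (hls : ∀ x y z : g, P (P x y) z - P x (P y z) = P (P y x) z - P y (P x z))
    (hcomp : ∀ x y : g, P x y - P y x = ⁅x, y⁆) :
    ((∀ x y : g, LinearMap.trace ℝ g (P x ∘ₗ P y) = 0) → LieAlgebra.IsSolvable g) ∧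
    (LieRing.IsNilpotent g → ∀ x y : g, LinearMap.trace ℝ g (P x ∘ₗ P y) = 0) := by
  classical
  have hinj : Function.Injective ω := by
    intro x y hxy
    have hz : ∀ z, ω (x - y) z = 0 := by
      intro z
      rw [map_sub, LinearMap.sub_apply, hxy, sub_self]
    have := hnondeg _ hz
    exact sub_eq_zero.mp this
  have hsurj : Function.Surjective ω :=
    (LinearMap.injective_iff_surjective_of_finrank_eq_finrank
      (Subspace.dual_finrank_eq (V := g)).symm).mp hinj
  let e : g ≃ₗ[ℝ] Module.Dual ℝ g := LinearEquiv.ofBijective ω ⟨hinj, hsurj⟩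
  have key : ∀ x y : g, trace ℝ g (P x ∘ₗ P y) = killingForm ℝ g y x := by
    intro x y
    set f : g →ₗ[ℝ] g := LieAlgebra.ad ℝ g y ∘ₗ LieAlgebra.ad ℝ g x with hf
    have hcomm : ∀ u : g, ω ((P x ∘ₗ P y) u) = f.dualMap (ω u) := by
      intro u
      ext v
      have h1 : ω (P x (P y u)) v = - ω (P y u) ⁅x, v⁆ := hdef x (P y u) v
      have h2 : ω (P y u) ⁅x, v⁆ = - ω u ⁅y, ⁅x, v⁆⁆ := hdef y u ⁅x, v⁆
      have h3 : ω ((P x ∘ₗ P y) u) v = ω u ⁅y, ⁅x, v⁆⁆ := by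
        rw [LinearMap.comp_apply, h1, h2, neg_neg]
      rw [h3]
      have h4 : f.dualMap (ω u) v = ω u (f v) := rfl
      rw [h4, hf]
      simp [LieAlgebra.ad_apply]
    have heq : P x ∘ₗ P y =
        e.symm.conj (f.dualMap : Module.End ℝ (Module.Dual ℝ g)) := by
      ext u
      apply e.injective
      have h5 : e.symm.conj (f.dualMap : Module.End ℝ (Module.Dual ℝ g)) u =
          e.symm (f.dualMap (e u)) := by
        rw [LinearEquiv.conj_apply]
        simp
      rw [h5, LinearEquiv.apply_symm_apply]
      exact hcomm u
    rw [heq, LinearMap.trace_conj']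
    have h6 : (f.dualMap : Module.End ℝ (Module.Dual ℝ g)) =
        Module.Dual.transpose (R := ℝ) f := rfl
    rw [h6, LinearMap.trace_transpose']
    exact (killingForm_apply_apply ℝ g y x).symm
  constructor
  · intro h0
    exact real_solvable_of_killing_zero (fun x y => by rw [← key y x]; exact h0 y x)
  · intro hnilp x y
    haveI := hnilp
    rw [key x y]
    have h7 : LieModule.traceForm ℝ g g = 0 :=
      LieModule.traceForm_eq_zero_of_isNilpotent ℝ g g
    have h8 : killingForm ℝ g y x = (LieModule.traceForm ℝ g g) y x := rfl
    rw [h8, h7]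
    simp
end
end
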